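/- Let $A$ and $B$ be $p \times p$ real positive semidefinite matrices with unit diagonals. Then $\lambda_{\min}(A \odot B) \geq \lambda_{\min}(A) + \lambda_{\min}(B) - \lambda_{\min}(A)\lambda_{\min}(B)$. -/

import Mathlib

open Matrix

/-- The smallest eigenvalue of a matrix, defined as the infimum of its eigenvalues. -/
noncomputable def lambdaMin {p : ℕ} (A : Matrix (Fin p) (Fin p) ℝ) : ℝ :=
  sInf {μ : ℝ | ∃ v : Fin p → ℝ, v ≠ 0 ∧ A.mulVec v = μ • v}

private lemma dot_self_pos {p : ℕ} {v : Fin p → ℝ} (hv : v ≠ 0) : 0 < v ⬝ᵥ v := by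
  have := Matrix.dotProduct_self_star_pos_iff (v := v) |>.mpr hv
  simpa using this

/-- If `M - c • 1` is PSD, then `c` is a lower bound on eigenvalues of `M`. -/
private lemma lb_of_psd {p : ℕ} {M : Matrix (Fin p) (Fin p) ℝ} {c : ℝ}
    (h : (M - c • (1 : Matrix (Fin p) (Fin p) ℝ)).PosSemidef) :
    ∀ μ ∈ {μ : ℝ | ∃ v : Fin p → ℝ, v ≠ 0 ∧ M.mulVec v = μ • v}, c ≤ μ := by
  rintro μ ⟨v, hv, hMv⟩
  have h2 := h.dotProduct_mulVec_nonneg v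
  have hd : 0 < v ⬝ᵥ v := dot_self_pos hv
  rw [Matrix.sub_mulVec, Matrix.smul_mulVec, Matrix.one_mulVec, hMv] at h2
  simp only [star_trivial, dotProduct_sub, dotProduct_smul, smul_eq_mul] at h2
  have : 0 ≤ (μ - c) * (v ⬝ᵥ v) := by ring_nf; ring_nf at h2; linarith
  nlinarith

private lemma spec_nonempty {p : ℕ} (hp : 0 < p) {M : Matrix (Fin p) (Fin p) ℝ}
    (hM : M.IsHermitian) :
    Set.Nonempty {μ : ℝ | ∃ v : Fin p → ℝ, v ≠ 0 ∧ M.mulVec v = μ • v} := by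
  refine ⟨hM.eigenvalues ⟨0, hp⟩, ⇑(hM.eigenvectorBasis ⟨0, hp⟩), ?_, ?_⟩
  · have := hM.eigenvectorBasis.orthonormal.ne_zero ⟨0, hp⟩
    intro h
    apply this
    ext i
    exact congrFun h i
  · exact hM.mulVec_eigenvectorBasis ⟨0, hp⟩

private lemma spec_bddBelow {p : ℕ} {M : Matrix (Fin p) (Fin p) ℝ} (hM : M.PosSemidef) :
    BddBelow {μ : ℝ | ∃ v : Fin p → ℝ, v ≠ 0 ∧ M.mulVec v = μ • v} := by
  refine ⟨0, fun μ hμ => ?_⟩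
  have : (M - (0:ℝ) • (1 : Matrix (Fin p) (Fin p) ℝ)).PosSemidef := by simpa using hM
  exact lb_of_psd this μ hμ

/-- `M - λmin M • 1` is PSD for `M` PSD. -/
private lemma sub_lambdaMin_psd {p : ℕ} (hp : 0 < p) {M : Matrix (Fin p) (Fin p) ℝ}
    (hM : M.PosSemidef) :
    (M - lambdaMin M • (1 : Matrix (Fin p) (Fin p) ℝ)).PosSemidef := by
  have hherm : (M - lambdaMin M • (1 : Matrix (Fin p) (Fin p) ℝ)).IsHermitian :=
    hM.1.sub (by simp [Matrix.IsHermitian])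
  refine hherm.posSemidef_iff_eigenvalues_nonneg.mpr fun i => ?_
  set d := hherm.eigenvalues i with hd
  set v : Fin p → ℝ := ⇑(hherm.eigenvectorBasis i) with hv
  have h1 : (M - lambdaMin M • (1 : Matrix (Fin p) (Fin p) ℝ)).mulVec v = d • v :=
    hherm.mulVec_eigenvectorBasis i
  have h2 : M.mulVec v = (d + lambdaMin M) • v := by
    rw [Matrix.sub_mulVec, Matrix.smul_mulVec, Matrix.one_mulVec] at h1
    have := congrArg (· + lambdaMin M • v) h1
    simp only [sub_add_cancel] at this
    rw [this, add_smul, add_comm]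
  have hvne : v ≠ 0 := by
    have := hherm.eigenvectorBasis.orthonormal.ne_zero i
    intro h; apply this; ext j; exact congrFun h j
  have hmem : d + lambdaMin M ∈ {μ : ℝ | ∃ w : Fin p → ℝ, w ≠ 0 ∧ M.mulVec w = μ • w} :=
    ⟨v, hvne, h2⟩
  have := csInf_le (spec_bddBelow hM) hmem
  have h3 : lambdaMin M ≤ d + lambdaMin M := this
  show (0:ℝ) ≤ d
  linarith

/-- Schur product theorem. -/
private lemma schur_psd {p : ℕ} {A B : Matrix (Fin p) (Fin p) ℝ}
    (hA : A.PosSemidef) (hB : B.PosSemidef) : (A ⊙ B).PosSemidef := by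
  obtain ⟨C, hC⟩ : ∃ C : Matrix (Fin p) (Fin p) ℝ, B = Cᴴ * C := by
    open scoped MatrixOrder in exact CStarAlgebra.nonneg_iff_eq_star_mul_self.mp hB.nonneg
  refine posSemidef_iff_dotProduct_mulVec.mpr ⟨?_, ?_⟩
  · have hAs := hA.1
    have hBs := hB.1
    ext i j
    simp only [conjTranspose_apply, hadamard_apply, star_trivial]
    rw [← hAs.apply i j, ← hBs.apply i j]
    simp [conjTranspose_apply]
  · intro x
    have key : star x ⬝ᵥ (A ⊙ B) *ᵥ x
        = ∑ k, (fun i => x i * C k i) ⬝ᵥ A *ᵥ (fun i => x i * C k i) := by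
      simp only [star_trivial, dotProduct, mulVec, hadamard_apply, hC, mul_apply,
        conjTranspose_apply, star_trivial, Finset.mul_sum, Finset.sum_mul]
      rw [show (∑ i : Fin p, ∑ j : Fin p, ∑ k : Fin p, x i * (A i j * (C k i * C k j) * x j))
          = ∑ i : Fin p, ∑ k : Fin p, ∑ j : Fin p, x i * (A i j * (C k i * C k j) * x j) from
        Finset.sum_congr rfl fun i _ => Finset.sum_comm]
      rw [Finset.sum_comm]
      apply Finset.sum_congr rfl; intro k _
      apply Finset.sum_congr rfl; intro i _
      apply Finset.sum_congr rfl; intro j _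
      ring
    rw [key]
    apply Finset.sum_nonneg
    intro k _
    have := hA.dotProduct_mulVec_nonneg (fun i => x i * C k i)
    simpa using this

theorem stmt_1 {p : ℕ} (hp : 0 < p) (A B : Matrix (Fin p) (Fin p) ℝ)
    (hA : A.PosSemidef) (hB : B.PosSemidef)
    (hAd : ∀ i, A i i = 1) (hBd : ∀ i, B i i = 1) :
    lambdaMin A + lambdaMin B - lambdaMin A * lambdaMin B
      ≤ lambdaMin (Matrix.hadamard A B) := by
  set a := lambdaMin A
  set b := lambdaMin B
  have hCA : (A - a • (1 : Matrix (Fin p) (Fin p) ℝ)).PosSemidef := sub_lambdaMin_psd hp hA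
  have hCB : (B - b • (1 : Matrix (Fin p) (Fin p) ℝ)).PosSemidef := sub_lambdaMin_psd hp hB
  have hprod : ((A - a • 1) ⊙ (B - b • 1)).PosSemidef := schur_psd hCA hCB
  have heq : (A - a • 1) ⊙ (B - b • 1)
      = A ⊙ B - (a + b - a * b) • (1 : Matrix (Fin p) (Fin p) ℝ) := by
    ext i j
    by_cases h : i = j
    · subst h
      simp [hadamard_apply, Matrix.one_apply, hAd i, hBd i]
      ring
    · simp [hadamard_apply, Matrix.one_apply, h]
  rw [heq] at hprod
  have hAB : (A ⊙ B).PosSemidef := schur_psd hA hB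
  refine le_csInf (spec_nonempty hp hAB.1) ?_
  exact lb_of_psd hprod
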